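/- For every n ≥ 1, the following polynomial identity holds in ℝ[x_1,…,x_n]: (Σ_{i=1}^n x_i − 1) + Σ_{i=0}^{n−1} 2^i·(−x_{n−i} + Σ_{j=1}^{n−i−1} x_j) = −1. (This exhibits a degree-1 Sherali-Adams refutation, with coefficients 2^i, of the formula encoding the LeastNumber problem, whose axioms are Σ_{i=1}^n x_i − 1 ≥ 0 and −x_i + Σ_{j<i} x_j ≥ 0 for each i ∈ [n].) -/
import Mathlib


open MvPolynomial

private lemma geom_two {R : Type*} [CommRing R] (m : ℕ) :
    ∑ k ∈ Finset.range m, (2 : R) ^ k = 2 ^ m - 1 := by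
  induction m with
  | zero => simp
  | succ m ih => rw [Finset.sum_range_succ, ih]; ring

private lemma key {n : ℕ} {R : Type*} [CommRing R] (j : Fin n) :
    ∑ i ∈ Finset.univ.filter (fun i : Fin n => j < i), (2 : R) ^ (i.rev : ℕ)
      = 2 ^ (j.rev : ℕ) - 1 := by
  rw [← geom_two (R := R) (j.rev : ℕ)]
  refine Finset.sum_bij' (fun i _ => (i.rev : ℕ))
    (fun k hk => (⟨k, lt_of_lt_of_le (Finset.mem_range.mp hk) (Nat.le_of_lt j.rev.isLt)⟩ : Fin n).rev)
    ?_ ?_ ?_ ?_ ?_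
  · intro a ha
    simp only [Finset.mem_filter, Fin.lt_def] at ha
    simp only [Finset.mem_range, Fin.val_rev]
    omega
  · intro k hk
    simp only [Finset.mem_range, Fin.val_rev] at hk
    simp only [Finset.mem_filter, Finset.mem_univ, true_and, Fin.lt_def, Fin.val_rev]
    omega
  · intro a ha
    simp only [Finset.mem_filter, Fin.lt_def] at ha
    apply Fin.ext
    simp [Fin.val_rev]
    omega
  · intro k hk
    simp only [Finset.mem_range, Fin.val_rev] at hk
    simp only [Fin.val_rev]
    omega
  · intro a _; rfl

/-! We index the variables `x_1, …, x_n` zero-based by `Fin n`: the paper's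
`x_j` (for `1 ≤ j ≤ n`) is `X ⟨j-1⟩`.  In the paper's sum over
`i = 0, …, n-1`, the variable `x_{n-i}` is `X i.rev` (where
`i.rev = n - 1 - i`), and `Σ_{j=1}^{n-i-1} x_j` is the sum of `X j` over
`j < i.rev`. -/

/-- For every `n ≥ 1`, the polynomial identity
`(Σ_{i=1}^n x_i - 1) + Σ_{i=0}^{n-1} 2^i·(-x_{n-i} + Σ_{j=1}^{n-i-1} x_j) = -1`
holds in `ℝ[x_1, …, x_n]`.  (This exhibits a degree-1 Sherali-Adams refutation,
with coefficients `2^i`, of the LeastNumber formula, whose axioms are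
`Σ_{i∈[n]} x_i - 1 ≥ 0` and `-x_i + Σ_{j<i} x_j ≥ 0` for each `i ∈ [n]`.) -/
theorem stmt14 (n : ℕ) (hn : 1 ≤ n) :
    ((∑ i : Fin n, X i) - 1) +
      ∑ i : Fin n, (2 : MvPolynomial (Fin n) ℝ) ^ (i : ℕ) *
        (-(X i.rev) + ∑ j ∈ Finset.univ.filter (fun j : Fin n => j < i.rev), X j)
      = -1 := by
  set R := MvPolynomial (Fin n) ℝ
  have hmain : (∑ i : Fin n, (2 : R) ^ (i : ℕ) *
        (-(X i.rev) + ∑ j ∈ Finset.univ.filter (fun j : Fin n => j < i.rev), X j))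
      = -(∑ i : Fin n, (X i : R)) := by
    have hrev : (∑ i : Fin n, (2 : R) ^ (i : ℕ) *
          (-(X i.rev) + ∑ j ∈ Finset.univ.filter (fun j : Fin n => j < i.rev), X j))
        = ∑ i : Fin n, (2 : R) ^ ((i.rev : ℕ)) *
          (-(X i) + ∑ j ∈ Finset.univ.filter (fun j : Fin n => j < i), X j) := by
      refine Fintype.sum_equiv (Fin.revPerm) _ _ ?_
      intro i
      simp [Fin.rev_rev]
    rw [hrev]
    have expand : ∀ i : Fin n, (2 : R) ^ ((i.rev : ℕ)) *
          (-(X i) + ∑ j ∈ Finset.univ.filter (fun j : Fin n => j < i), X j)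
        = -((2 : R) ^ ((i.rev : ℕ)) * X i) +
          ∑ j : Fin n, (if j < i then (2 : R) ^ ((i.rev : ℕ)) * X j else 0) := by
      intro i
      rw [← Finset.sum_filter, ← Finset.mul_sum]
      ring
    simp only [expand]
    rw [Finset.sum_add_distrib, Finset.sum_comm]
    have swap : (∑ j : Fin n, ∑ i : Fin n, (if j < i then (2 : R) ^ ((i.rev : ℕ)) * X j else 0))
        = ∑ j : Fin n, ((2 : R) ^ ((j.rev : ℕ)) - 1) * X j := by
      refine Finset.sum_congr rfl ?_
      intro j _
      rw [← Finset.sum_filter, ← Finset.sum_mul, key]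
    rw [swap, ← Finset.sum_add_distrib]
    rw [← Finset.sum_neg_distrib]
    refine Finset.sum_congr rfl ?_
    intro i _
    ring
  rw [hmain]
  ring
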